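/- For each finite type σ over Ω and countable ordinal ζ, if f_ξ ∈ Ω^mon_σ for all ξ < ζ, then limsup_{ξ→ζ} f_ξ ∈ Ω^mon_σ; that is, the class of hereditarily monotone functionals is closed under limsup of countably-indexed families. -/

import Mathlib

/-!  Framework: finite type structure over Ω = countable ordinals,
     limsup/liminf, transfinite iteration functionals, hereditarily
     positive and hereditarily monotone functionals. -/

noncomputable section
namespace IterOrd

open Ordinal

theorem omega1_pos : (0 : Ordinal) < ω₁ := Ordinal.omega0_pos.trans Ordinal.omega0_lt_omega_one

/-- `Om` is Ω, the set of countable ordinals (ordinals `< ω₁`). -/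
abbrev Om : Type 1 := {o : Ordinal // o < ω₁}

/-- Infimum of a subset of Ω (the minimum for nonempty sets; `0` for `∅`). -/
def infOm (s : Set Om) : Om :=
  ⟨sInf (Subtype.val '' s), by
    rcases (Subtype.val '' s).eq_empty_or_nonempty with h | h
    · rw [h]; simpa using omega1_pos
    · obtain ⟨x, _, he⟩ := csInf_mem h
      exact he ▸ x.2⟩

/-- Supremum of a subset of Ω.  Whenever the supremum of the set exists in Ω
(in particular for every countable subset, by regularity of `ω₁`) this is the
genuine supremum; otherwise it takes a junk value. -/
def supOm (s : Set Om) : Om :=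
  if h : sSup (Subtype.val '' s) < ω₁ then ⟨sSup (Subtype.val '' s), h⟩ else ⟨0, omega1_pos⟩

/-- Finite types over the base type `o` (interpreted as Ω). -/
inductive Ty : Type
  | base : Ty
  | arrow : Ty → Ty → Ty
deriving DecidableEq

/-- The full type structure over Ω: `El base = Ω` and
`El (arrow σ τ)` is the set of all functions `El σ → El τ`. -/
@[reducible] def El : Ty → Type 1
  | .base => Om
  | .arrow σ τ => El σ → El τ

/-- The order on each `El σ`: the ordinal order at base type, pointwise at arrow types. -/
def Le : (σ : Ty) → El σ → El σ → Prop
  | .base => fun x y => x ≤ y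
  | .arrow σ τ => fun f g => ∀ x : El σ, Le τ (f x) (g x)

/-- Suprema, computed pointwise at function types. -/
def supEl : (σ : Ty) → Set (El σ) → El σ
  | .base => supOm
  | .arrow σ τ => fun S (x : El σ) => supEl τ ((fun f : El (.arrow σ τ) => f x) '' S)

/-- Infima, computed pointwise at function types. -/
def infEl : (σ : Ty) → Set (El σ) → El σ
  | .base => infOm
  | .arrow σ τ => fun S (x : El σ) => infEl τ ((fun f : El (.arrow σ τ) => f x) '' S)

/-- `limsup_{ξ→ζ} f ξ = inf_{γ<ζ} sup_{γ≤ξ<ζ} f ξ`. -/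
def limsupEl (σ : Ty) (ζ : Ordinal) (f : ∀ ξ : Ordinal, ξ < ζ → El σ) : El σ :=
  infEl σ {y | ∃ γ, ∃ _ : γ < ζ, y = supEl σ {z | ∃ ξ, ∃ h : ξ < ζ, γ ≤ ξ ∧ z = f ξ h}}

/-- `liminf_{ξ→ζ} f ξ = sup_{γ<ζ} inf_{γ≤ξ<ζ} f ξ`. -/
def liminfEl (σ : Ty) (ζ : Ordinal) (f : ∀ ξ : Ordinal, ξ < ζ → El σ) : El σ :=
  supEl σ {y | ∃ γ, ∃ _ : γ < ζ, y = infEl σ {z | ∃ ξ, ∃ h : ξ < ζ, γ ≤ ξ ∧ z = f ξ h}}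

/-- `limsup` of a ζ-indexed sequence of ordinals. -/
def oLimsup (ζ : Ordinal) (a : Ordinal → Ordinal) : Ordinal :=
  sInf {s | ∃ γ, γ < ζ ∧ s = sSup (a '' {ξ | γ ≤ ξ ∧ ξ < ζ})}

/-- `liminf` of a ζ-indexed sequence of ordinals. -/
def oLiminf (ζ : Ordinal) (a : Ordinal → Ordinal) : Ordinal :=
  sSup {s | ∃ γ, γ < ζ ∧ s = sInf (a '' {ξ | γ ≤ ξ ∧ ξ < ζ})}

/-- The α-iteration functional of type σ:
`Iter 0 f x = x`, `Iter (α+1) f x = f (Iter α f x)`, and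
`Iter μ f x = limsup_{ξ→μ} Iter ξ f x` for limit μ. -/
def Iter (σ : Ty) (α : Ordinal) : (El σ → El σ) → El σ → El σ :=
  Ordinal.limitRecOn (motive := fun _ => (El σ → El σ) → El σ → El σ) α
    (fun _ x => x)
    (fun _ ih f x => f (ih f x))
    (fun μ _ ih f x => limsupEl σ μ (fun ξ h => ih ξ h f x))

/-- The pair (hereditarily positive, ≤hp), defined simultaneously by recursion on the type.
Every element of `Ω` and of `Ω_{ρ→τ}` with `ρ ≠ τ` is h.p., and `≤hp` there is `≤`;
`f : Ω_{τ→τ}` is h.p. iff it preserves h.p., is inflationary on h.p. arguments and is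
monotone (w.r.t. `≤hp`) on h.p. arguments; `f ≤hp f'` on `Ω_{τ→τ}` iff `f x ≤hp f' x`
for every h.p. `x`. -/
def HPaux : (σ : Ty) → (El σ → Prop) × (El σ → El σ → Prop)
  | .base => ⟨fun _ => True, fun x y => x ≤ y⟩
  | .arrow ρ τ =>
      ⟨fun f =>
        if h : ρ = τ then
          (∀ x, (HPaux ρ).1 x → (HPaux τ).1 (f x)) ∧
          (∀ x, (HPaux ρ).1 x → (HPaux τ).2 (cast (congrArg El h) x) (f x)) ∧
          (∀ x y, (HPaux ρ).1 x → (HPaux ρ).1 y → (HPaux ρ).2 x y → (HPaux τ).2 (f x) (f y))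
        else True,
       fun f g =>
        if ρ = τ then ∀ x, (HPaux ρ).1 x → (HPaux τ).2 (f x) (g x)
        else Le (.arrow ρ τ) f g⟩

/-- Hereditarily positive functionals. -/
def Hp (σ : Ty) : El σ → Prop := (HPaux σ).1

/-- The order `≤hp`. -/
def HpLe (σ : Ty) : El σ → El σ → Prop := (HPaux σ).2

/-- `f =hp g` iff `f ≤hp g` and `g ≤hp f`. -/
def HpEq (σ : Ty) (f g : El σ) : Prop := HpLe σ f g ∧ HpLe σ g f

/-- The pair (hereditarily monotone, ≤ on the hereditarily monotone structure),
by recursion on the type.  `f` is hereditarily monotone iff it maps hereditarily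
monotone arguments to hereditarily monotone values, monotonically; the order is
pointwise over hereditarily monotone arguments (i.e. the order of `Ω^mon`). -/
def HMaux : (σ : Ty) → (El σ → Prop) × (El σ → El σ → Prop)
  | .base => ⟨fun _ => True, fun x y => x ≤ y⟩
  | .arrow σ τ =>
      ⟨fun f =>
        (∀ x, (HMaux σ).1 x → (HMaux τ).1 (f x)) ∧
        (∀ x y, (HMaux σ).1 x → (HMaux σ).1 y → (HMaux σ).2 x y → (HMaux τ).2 (f x) (f y)),
       fun f g => ∀ x, (HMaux σ).1 x → (HMaux τ).2 (f x) (g x)⟩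

/-- Hereditarily monotone functionals: the members of the type structure `Ω^mon`. -/
def HM (σ : Ty) : El σ → Prop := (HMaux σ).1

/-- The (pointwise) order of the hereditarily monotone type structure `Ω^mon`. -/
def LeHM (σ : Ty) : El σ → El σ → Prop := (HMaux σ).2

/-- Equality in the hereditarily monotone type structure `Ω^mon`. -/
def EqHM (σ : Ty) (f g : El σ) : Prop := LeHM σ f g ∧ LeHM σ g f

section Helpers

lemma bddAbove_val (S : Set Om) : BddAbove (Subtype.val '' S) :=
  ⟨ω₁, by rintro x ⟨y, -, rfl⟩; exact y.2.le⟩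

lemma cof_omega1 : (ω₁ : Ordinal).cof = Cardinal.aleph 1 := by
  rw [← Cardinal.ord_aleph, Cardinal.isRegular_aleph_one.cof_eq]

lemma card_lt_of_lt_omega1 {ζ : Ordinal} (hζ : ζ < ω₁) : ζ.card < Cardinal.aleph 1 :=
  Cardinal.lt_ord.1 (by rwa [Cardinal.ord_aleph])

/-- The sup of a "tail set" of a ζ-indexed family in Ω is genuinely `< ω₁`. -/
lemma tail_sSup_lt {ζ : Ordinal} (hζ : ζ < ω₁) (f : ∀ ξ : Ordinal, ξ < ζ → Om) (γ : Ordinal) :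
    sSup (Subtype.val '' {z | ∃ ξ, ∃ h : ξ < ζ, γ ≤ ξ ∧ z = f ξ h}) < ω₁ := by
  set T : Set Ordinal := Subtype.val '' {z | ∃ ξ, ∃ h : ξ < ζ, γ ≤ ξ ∧ z = f ξ h} with hT
  have hmem : ∀ x ∈ T, x < ω₁ := by rintro x ⟨z, -, rfl⟩; exact z.2
  have hIio : Countable (Set.Iio ζ) := by
    rw [Set.countable_coe_iff, Cardinal.countable_iff_lt_aleph_one, Ordinal.mk_Iio_ordinal,
      Cardinal.lift_lt_aleph_one]
    exact card_lt_of_lt_omega1 hζ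
  have hTc : T.Countable := by
    apply Set.Countable.image
    apply Set.Countable.mono (s₁ := {z | ∃ ξ, ∃ h : ξ < ζ, γ ≤ ξ ∧ z = f ξ h})
      (s₂ := Set.range (fun p : Set.Iio ζ => f p.1 p.2))
    · rintro z ⟨ξ, h, -, rfl⟩; exact ⟨⟨ξ, h⟩, rfl⟩
    · exact Set.countable_range _
  rcases T.eq_empty_or_nonempty with hTe | hTn
  · rw [hTe, csSup_empty]
    exact omega1_pos
  · obtain ⟨h, hTr⟩ := hTc.exists_eq_range hTn
    rw [hTr]
    have : sSup (Set.range h) = iSup h := rfl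
    rw [hTr] at hmem
    rw [this]
    exact Ordinal.iSup_lt_omega_one fun n => hmem _ ⟨n, rfl⟩

lemma le_supOm {S : Set Om} (hS : sSup (Subtype.val '' S) < ω₁) {x : Om} (hx : x ∈ S) :
    x ≤ supOm S := by
  rw [supOm, dif_pos hS]
  show x.val ≤ sSup (Subtype.val '' S)
  exact le_csSup (bddAbove_val S) ⟨x, hx, rfl⟩

lemma supOm_le {S : Set Om} (hS : sSup (Subtype.val '' S) < ω₁) {b : Om}
    (hb : ∀ x ∈ S, x ≤ b) : supOm S ≤ b := by
  rw [supOm, dif_pos hS]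
  show sSup (Subtype.val '' S) ≤ b.val
  exact csSup_le' (by rintro x ⟨z, hz, rfl⟩; exact hb z hz)

lemma infOm_le {S : Set Om} {x : Om} (hx : x ∈ S) : infOm S ≤ x := by
  show sInf (Subtype.val '' S) ≤ x.val
  exact csInf_le (OrderBot.bddBelow _) ⟨x, hx, rfl⟩

/-- Monotonicity of `limsup` at base type. -/
lemma limsup_base_mono {ζ : Ordinal} (hζ : ζ < ω₁) (f g : ∀ ξ : Ordinal, ξ < ζ → Om)
    (hfg : ∀ ξ (h : ξ < ζ), f ξ h ≤ g ξ h) :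
    limsupEl .base ζ f ≤ limsupEl .base ζ g := by
  by_cases h0 : 0 < ζ
  · -- the defining set for `g` is nonempty; its inf is attained
    set Sg : Set Om := {y | ∃ γ, ∃ _ : γ < ζ, y = supEl .base {z | ∃ ξ, ∃ h : ξ < ζ, γ ≤ ξ ∧ z = g ξ h}} with hSg
    have hne : (Subtype.val '' Sg).Nonempty :=
      ⟨_, ⟨_, ⟨0, h0, rfl⟩, rfl⟩⟩
    obtain ⟨y, hySg, hyval⟩ := csInf_mem hne
    have hinf : limsupEl .base ζ g = y := by
      apply Subtype.ext
      exact hyval.symm ▸ rfl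
    rw [hinf]
    obtain ⟨γ, hγ, rfl⟩ := hySg
    have h1 : limsupEl .base ζ f ≤
        supEl .base {z | ∃ ξ, ∃ h : ξ < ζ, γ ≤ ξ ∧ z = f ξ h} :=
      infOm_le ⟨γ, hγ, rfl⟩
    refine h1.trans ?_
    apply supOm_le (tail_sSup_lt hζ f γ)
    rintro x ⟨ξ, h, hγξ, rfl⟩
    exact (hfg ξ h).trans (le_supOm (tail_sSup_lt hζ g γ) ⟨ξ, h, hγξ, rfl⟩)
  · have hz : ζ = 0 := le_antisymm (not_lt.1 h0) (zero_le (a := ζ))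
    subst hz
    have : (fun (ξ : Ordinal) (h : ξ < 0) => f ξ h) = (fun ξ h => g ξ h) := by
      funext ξ h; exact absurd h (zero_le (a := ξ)).not_gt
    rw [show limsupEl .base 0 f = limsupEl .base 0 g from congrArg _ this]

/-- `limsup` at an arrow type commutes with application. -/
lemma limsupEl_app (σ τ : Ty) (ζ : Ordinal) (F : ∀ ξ : Ordinal, ξ < ζ → El (.arrow σ τ))
    (x : El σ) :
    limsupEl (.arrow σ τ) ζ F x = limsupEl τ ζ (fun ξ h => F ξ h x) := by
  show infEl τ _ = infEl τ _
  congr 1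
  ext y
  constructor
  · rintro ⟨s, ⟨γ, hγ, rfl⟩, rfl⟩
    refine ⟨γ, hγ, ?_⟩
    show supEl τ _ = supEl τ _
    congr 1
    ext z
    constructor
    · rintro ⟨w, ⟨ξ, h, hγξ, rfl⟩, rfl⟩
      exact ⟨ξ, h, hγξ, rfl⟩
    · rintro ⟨ξ, h, hγξ, rfl⟩
      exact ⟨F ξ h, ⟨ξ, h, hγξ, rfl⟩, rfl⟩
  · rintro ⟨γ, hγ, rfl⟩
    refine ⟨supEl (.arrow σ τ) {z | ∃ ξ, ∃ h : ξ < ζ, γ ≤ ξ ∧ z = F ξ h}, ⟨γ, hγ, rfl⟩, ?_⟩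
    show supEl τ _ = supEl τ _
    congr 1
    ext z
    constructor
    · rintro ⟨w, ⟨ξ, h, hγξ, rfl⟩, rfl⟩
      exact ⟨ξ, h, hγξ, rfl⟩
    · rintro ⟨ξ, h, hγξ, rfl⟩
      exact ⟨F ξ h, ⟨ξ, h, hγξ, rfl⟩, rfl⟩

/-- `LeHM` is reflexive on hereditarily monotone elements. -/
lemma le_refl_hm (σ : Ty) : ∀ x : El σ, HM σ x → LeHM σ x x := by
  induction σ with
  | base => exact fun x _ => le_refl x
  | arrow σ τ _ ihτ => exact fun f hf x hx => ihτ (f x) (hf.1 x hx)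

/-- Main induction: `limsup` of HM families is HM, and `limsup` is monotone. -/
lemma limsup_hm_mono (σ : Ty) :
    ∀ {ζ : Ordinal}, ζ < ω₁ → ∀ (f g : ∀ ξ : Ordinal, ξ < ζ → El σ),
      (∀ ξ (h : ξ < ζ), HM σ (f ξ h)) → (∀ ξ (h : ξ < ζ), HM σ (g ξ h)) →
      (∀ ξ (h : ξ < ζ), LeHM σ (f ξ h) (g ξ h)) →
      HM σ (limsupEl σ ζ f) ∧ LeHM σ (limsupEl σ ζ f) (limsupEl σ ζ g) := by
  induction σ with
  | base =>
    intro ζ hζ f g _ _ hfg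
    exact ⟨trivial, limsup_base_mono hζ f g hfg⟩
  | arrow σ τ _ ihτ =>
    intro ζ hζ f g hf hg hfg
    refine ⟨⟨?_, ?_⟩, ?_⟩
    · intro x hx
      have := (ihτ hζ (fun ξ h => f ξ h x) (fun ξ h => f ξ h x)
        (fun ξ h => (hf ξ h).1 x hx) (fun ξ h => (hf ξ h).1 x hx)
        (fun ξ h => (hf ξ h).2 x x hx hx (le_refl_hm σ x hx))).1
      rwa [show limsupEl (.arrow σ τ) ζ f x = _ from limsupEl_app σ τ ζ f x]
    · intro x y hx hy hxy
      have := (ihτ hζ (fun ξ h => f ξ h x) (fun ξ h => f ξ h y)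
        (fun ξ h => (hf ξ h).1 x hx) (fun ξ h => (hf ξ h).1 y hy)
        (fun ξ h => (hf ξ h).2 x y hx hy hxy)).2
      rwa [show limsupEl (.arrow σ τ) ζ f x = _ from limsupEl_app σ τ ζ f x,
        show limsupEl (.arrow σ τ) ζ f y = _ from limsupEl_app σ τ ζ f y]
    · intro x hx
      have := (ihτ hζ (fun ξ h => f ξ h x) (fun ξ h => g ξ h x)
        (fun ξ h => (hf ξ h).1 x hx) (fun ξ h => (hg ξ h).1 x hx)
        (fun ξ h => hfg ξ h x hx)).2
      rwa [show limsupEl (.arrow σ τ) ζ f x = _ from limsupEl_app σ τ ζ f x,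
        show limsupEl (.arrow σ τ) ζ g x = _ from limsupEl_app σ τ ζ g x]

end Helpers

/-- If `f_ξ ∈ Ω^mon_σ` for all `ξ < ζ` (ζ countable), then
`limsup_{ξ→ζ} f_ξ ∈ Ω^mon_σ`. -/
theorem limsup_hm (σ : Ty) (ζ : Ordinal) (hζ : ζ < ω₁)
    (f : ∀ ξ : Ordinal, ξ < ζ → El σ) (hf : ∀ ξ (hξ : ξ < ζ), HM σ (f ξ hξ)) :
    HM σ (limsupEl σ ζ f) :=
  (limsup_hm_mono σ hζ f f hf hf (fun ξ h => le_refl_hm σ _ (hf ξ h))).1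

end IterOrd
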